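/- arXiv:1606.03643 — 5 statements merged into one kernel-verified Lean document; each statement's English description precedes it below -/
import Mathlib

section
/- The function H(x,y,z) = ε·p₁·(p₁x + p₂z)² + (p₁y − ε·p₂p₃)² is a first integral of the flow of the system ε·x' = −y, y' = p₁x + p₂z, z' = p₃; that is, the derivative of H along any solution of this system is zero. -/
/-- The function `H(x,y,z) = ε p₁ (p₁x + p₂z)² + (p₁y − ε p₂p₃)²` is a first integral
of the central-zone system `ε x' = −y`, `y' = p₁x + p₂z`, `z' = p₃`. -/
theorem first_integral_H (ε p1 p2 p3 : ℝ) (hε : 0 < ε) (x y z : ℝ → ℝ)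
    (hx : ∀ t, HasDerivAt x (-(y t) / ε) t)
    (hy : ∀ t, HasDerivAt y (p1 * x t + p2 * z t) t)
    (hz : ∀ t, HasDerivAt z p3 t) :
    ∀ t, HasDerivAt
      (fun s => ε * p1 * (p1 * x s + p2 * z s) ^ 2 + (p1 * y s - ε * p2 * p3) ^ 2) 0 t := by
  intro t
  have h1 : HasDerivAt (fun s => p1 * x s + p2 * z s)
      (p1 * (-(y t) / ε) + p2 * p3) t :=
    ((hx t).const_mul p1).add ((hz t).const_mul p2)
  have h2 : HasDerivAt (fun s => p1 * y s - ε * p2 * p3)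
      (p1 * (p1 * x t + p2 * z t)) t := ((hy t).const_mul p1).sub_const _
  have h3 := ((h1.pow 2).const_mul (ε * p1)).add (h2.pow 2)
  refine h3.congr_deriv ?_
  field_simp
  ring
end

section
/- For p₁ > 0 and ε > 0 with 1 − 4εp₁ > 0, set λ_A = −(1 + √(1 − 4εp₁))/2. Then the half-plane S_ε^A = {(x,y,z) : x < −δ, −λ_A²x + λ_A y + ε p₂ z = −δ λ_A − (p₂p₃/λ_A)ε²} is invariant under the flow of the system ε·x' = −y − x − δ, y' = p₁x + p₂z, z' = p₃ (the system in the zone x ≤ −δ, where f_δ(x) = −x − δ). -/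
/-- For `p₁ > 0`, `1 − 4εp₁ > 0` and `λ_A = −(1+√(1−4εp₁))/2`, the half-plane
`S_ε^A = {x < −δ, −λ_A²x + λ_A y + ε p₂ z = −δλ_A − (p₂p₃/λ_A)ε²}` is invariant under
the flow of `ε x' = −y − x − δ`, `y' = p₁x + p₂z`, `z' = p₃`: the defining linear
functional has zero derivative along the flow whenever it vanishes. -/
theorem attracting_slow_manifold_invariant (ε p1 p2 p3 δ : ℝ) (hε : 0 < ε)
    (hp1 : 0 < p1) (h4 : 0 < 1 - 4 * ε * p1) (hδ : 0 < δ)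
    (lamA : ℝ) (hlam : lamA = -(1 + Real.sqrt (1 - 4 * ε * p1)) / 2)
    (x y z : ℝ → ℝ)
    (hx : ∀ t, HasDerivAt x ((-(y t) - x t - δ) / ε) t)
    (hy : ∀ t, HasDerivAt y (p1 * x t + p2 * z t) t)
    (hz : ∀ t, HasDerivAt z p3 t) :
    ∀ t, (-(lamA ^ 2) * x t + lamA * y t + ε * p2 * z t + δ * lamA + (p2 * p3 / lamA) * ε ^ 2 = 0) →
      HasDerivAt
        (fun s => -(lamA ^ 2) * x s + lamA * y s + ε * p2 * z s + δ * lamA + (p2 * p3 / lamA) * ε ^ 2)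
        0 t := by
  intro t hG
  have hsq : Real.sqrt (1 - 4 * ε * p1) ^ 2 = 1 - 4 * ε * p1 :=
    Real.sq_sqrt h4.le
  have hsnn : 0 ≤ Real.sqrt (1 - 4 * ε * p1) := Real.sqrt_nonneg _
  have hlamne : lamA ≠ 0 := by
    rw [hlam]; intro h; nlinarith
  have hquad : lamA ^ 2 + lamA + ε * p1 = 0 := by
    rw [hlam]; nlinarith [hsq]
  have hεne : ε ≠ 0 := hε.ne'
  have hD : HasDerivAt
      (fun s => -(lamA ^ 2) * x s + lamA * y s + ε * p2 * z s + δ * lamA + (p2 * p3 / lamA) * ε ^ 2)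
      (-(lamA ^ 2) * ((-(y t) - x t - δ) / ε) + lamA * (p1 * x t + p2 * z t) + ε * p2 * p3) t := by
    have := ((((hx t).const_mul (-(lamA ^ 2))).add ((hy t).const_mul lamA)).add
      ((hz t).const_mul (ε * p2))).add_const (δ * lamA + (p2 * p3 / lamA) * ε ^ 2)
    exact this.congr_of_eventuallyEq (Filter.Eventually.of_forall fun s => by simp only [Pi.add_apply]; ring)
  convert hD using 1
  field_simp [hlamne] at hG ⊢
  linear_combination (-1 : ℝ) * hG + (-lamA * x t) * hquad
end

section
/- Suppose γ is a solution of the R-reversible system ε·x' = −y + f_δ(x), y' = p₁x + p₂z, z' = p₃ with γ(0) = p ∈ L_ε^A ⊂ {x = −δ} and γ(T) = q ∈ L_ε^R ⊂ {x = δ} for some T > 0, where L_ε^R = R(L_ε^A) with R(x,y,z) = (−x,y,−z). If among all such connecting solutions the flight time T determines the solution uniquely, then q = R(p). -/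
/-- The reversibility `R(x,y,z) = (−x, y, −z)`. -/
def Rmap : ℝ × ℝ × ℝ → ℝ × ℝ × ℝ := fun v => (-v.1, v.2.1, -v.2.2)

/-- Being a solution of `ε x' = −y + f_δ(x)`, `y' = p₁x + p₂z`, `z' = p₃`,
with `f_δ(x) = max(|x| − δ, 0)`. -/
def IsSol (ε p1 p2 p3 δ : ℝ) (γ : ℝ → ℝ × ℝ × ℝ) : Prop :=
  ∀ t : ℝ,
    HasDerivAt (fun s => (γ s).1) ((-(γ t).2.1 + max (|(γ t).1| - δ) 0) / ε) t ∧
    HasDerivAt (fun s => (γ s).2.1) (p1 * (γ t).1 + p2 * (γ t).2.2) t ∧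
    HasDerivAt (fun s => (γ s).2.2) p3 t

/-- If a solution `γ` of the reversible system connects `p ∈ L_ε^A` (at time 0) to
`q ∈ L_ε^R = R(L_ε^A)` (at time `T > 0`), and the flight time determines the connecting
solution uniquely, then `q = R(p)`. -/
theorem maximal_canards_are_reversible (ε p1 p2 p3 δ : ℝ) (hε : 0 < ε) (hδ : 0 < δ)
    (LA : Set (ℝ × ℝ × ℝ))
    (γ : ℝ → ℝ × ℝ × ℝ) (T : ℝ) (hT : 0 < T)
    (hγ : IsSol ε p1 p2 p3 δ γ)
    (hp : γ 0 ∈ LA) (hq : γ T ∈ Rmap '' LA)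
    (huniq : ∀ γ₁ γ₂ : ℝ → ℝ × ℝ × ℝ,
      IsSol ε p1 p2 p3 δ γ₁ → IsSol ε p1 p2 p3 δ γ₂ →
      γ₁ 0 ∈ LA → γ₂ 0 ∈ LA → γ₁ T ∈ Rmap '' LA → γ₂ T ∈ Rmap '' LA → γ₁ = γ₂) :
    γ T = Rmap (γ 0) := by
  set γ₂ : ℝ → ℝ × ℝ × ℝ := fun t => Rmap (γ (T - t)) with hγ₂def
  have hsub : ∀ t : ℝ, HasDerivAt (fun s : ℝ => T - s) (-1 : ℝ) t := by
    intro t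
    exact (hasDerivAt_id' t).const_sub T
  have hγ₂sol : IsSol ε p1 p2 p3 δ γ₂ := by
    intro t
    obtain ⟨h1, h2, h3⟩ := hγ (T - t)
    refine ⟨?_, ?_, ?_⟩
    · have := (h1.comp t (hsub t)).neg
      have heq : (fun s => (γ₂ s).1) = fun s => -((fun u => (γ u).1) (T - s)) := rfl
      rw [heq]
      refine this.congr_deriv ?_
      simp only [hγ₂def, Rmap, abs_neg]
      ring
    · have := h2.comp t (hsub t)
      have heq : (fun s => (γ₂ s).2.1) = fun s => ((fun u => (γ u).2.1) (T - s)) := rfl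
      rw [heq]
      refine this.congr_deriv ?_
      simp only [hγ₂def, Rmap]
      ring
    · have := (h3.comp t (hsub t)).neg
      have heq : (fun s => (γ₂ s).2.2) = fun s => -((fun u => (γ u).2.2) (T - s)) := rfl
      rw [heq]
      refine this.congr_deriv ?_
      ring
  have hRR : ∀ v : ℝ × ℝ × ℝ, Rmap (Rmap v) = v := by
    intro v; simp [Rmap]
  have hγ₂0 : γ₂ 0 ∈ LA := by
    obtain ⟨a, ha, hav⟩ := hq
    have : γ₂ 0 = a := by
      simp only [hγ₂def, sub_zero, ← hav, hRR]
    rwa [this]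
  have hγ₂T : γ₂ T ∈ Rmap '' LA := by
    refine ⟨γ 0, hp, ?_⟩
    simp [hγ₂def]
  have := huniq γ γ₂ hγ hγ₂sol hp hγ₂0 hq hγ₂T
  have hTeq : γ T = γ₂ T := by rw [this]
  rw [hTeq]
  simp [hγ₂def]
end

section
/- For p₃ > 0, p₁ > 0 and δ = π√ε, the z-intercepts of the lines L_ε^A and L_ε^R satisfy z_A* = δp₁/p₂ + p₃ε + O(ε²) and z_R* = −z_A* (exactly), and the common y-intercept satisfies y* = −δp₁ε + O(ε²); in particular, for ε small enough, sign(y*) = −sign(p₁) and sign(z_A*) = sign(p₁/p₂). -/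
open Filter

lemma lam_facts (p1 ε : ℝ) (hp1 : 0 < p1) (hε : 0 < ε) (h4 : 4 * ε * p1 ≤ 1) :
    (-(1 + Real.sqrt (1 - 4 * ε * p1)) / 2) ^ 2 + (-(1 + Real.sqrt (1 - 4 * ε * p1)) / 2)
      + ε * p1 = 0 ∧
    -(1 + Real.sqrt (1 - 4 * ε * p1)) / 2 ≤ -(1/2) ∧
    -1 ≤ -(1 + Real.sqrt (1 - 4 * ε * p1)) / 2 := by
  have h0 : (0:ℝ) ≤ 1 - 4 * ε * p1 := by linarith
  have hs0 : 0 ≤ Real.sqrt (1 - 4*ε*p1) := Real.sqrt_nonneg _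
  have hs1 : Real.sqrt (1 - 4*ε*p1) ≤ 1 := Real.sqrt_le_one.mpr (by nlinarith)
  have hsq : Real.sqrt (1 - 4*ε*p1) ^ 2 = 1 - 4*ε*p1 := Real.sq_sqrt h0
  refine ⟨by nlinarith [hsq], by linarith, by linarith⟩

lemma zA_id (p1 p2 p3 ε L D : ℝ) (hL : L^2 + L + ε*p1 = 0) (hL0 : L ≠ 0) (hε : ε ≠ 0)
    (hp2 : p2 ≠ 0) :
    (L/(ε*p2)) * (-D*(1+L) - (p2*p3/L^2)*ε^2) - (D*p1/p2 + p3*ε) = p1*p3*ε^2/L^2 := by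
  field_simp
  linear_combination (-(L^2*D + p2*p3*ε^2)) * hL

lemma yStar_id (p1 p2 p3 ε L D : ℝ) (hL : L^2 + L + ε*p1 = 0) (hL0 : L ≠ 0) :
    (-D*(1+L) - (p2*p3/L^2)*ε^2) + D*p1*ε = -(D*p1^2 + p2*p3)*ε^2/L^2 := by
  field_simp
  linear_combination (-(D*(L - p1*ε))) * hL

lemma div_sq_le (b L : ℝ) (hq : 1/4 ≤ L^2) : |b| / L^2 ≤ 4 * |b| := by
  have hL2 : 0 < L^2 := by linarith
  rw [div_le_iff₀ hL2]
  nlinarith [abs_nonneg b]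

set_option maxHeartbeats 1000000 in
/-- Intercepts of the lines `L_ε^A` and `L_ε^R` with `δ = π√ε`: exactly `z_R* = −z_A*`,
with asymptotics `z_A* = δp₁/p₂ + p₃ε + O(ε²)`, `y* = −δp₁ε + O(ε²)` as `ε → 0⁺`, and
for `ε` small enough `sign(y*) = −sign(p₁)` and `sign(z_A*) = sign(p₁/p₂)`. -/
theorem intercepts_asymptotics (p1 p2 p3 : ℝ) (hp1 : 0 < p1) (hp2 : p2 ≠ 0) (hp3 : 0 < p3) :
    let lamA := fun ε : ℝ => -(1 + Real.sqrt (1 - 4 * ε * p1)) / 2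
    let δ := fun ε : ℝ => Real.pi * Real.sqrt ε
    let yStar := fun ε : ℝ => -δ ε * (1 + lamA ε) - (p2 * p3 / (lamA ε) ^ 2) * ε ^ 2
    let zA := fun ε : ℝ => (lamA ε / (ε * p2)) *
      (-δ ε * (1 + lamA ε) - (p2 * p3 / (lamA ε) ^ 2) * ε ^ 2)
    let zR := fun ε : ℝ => (-(lamA ε) / (ε * p2)) *
      (-δ ε * (1 - (-(lamA ε))) - (p2 * p3 / (lamA ε) ^ 2) * ε ^ 2)
    (∀ ε : ℝ, 0 < ε → 4 * ε * p1 < 1 → zR ε = -(zA ε)) ∧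
    (fun ε : ℝ => zA ε - (δ ε * p1 / p2 + p3 * ε))
      =O[nhdsWithin 0 (Set.Ioi 0)] (fun ε : ℝ => ε ^ 2) ∧
    (fun ε : ℝ => yStar ε + δ ε * p1 * ε)
      =O[nhdsWithin 0 (Set.Ioi 0)] (fun ε : ℝ => ε ^ 2) ∧
    (∃ ε0 : ℝ, 0 < ε0 ∧ ∀ ε ∈ Set.Ioo 0 ε0,
      Real.sign (yStar ε) = -Real.sign p1 ∧ Real.sign (zA ε) = Real.sign (p1 / p2)) := by
  intro lamA δ yStar zA zR
  have hpi : (0:ℝ) < Real.pi := Real.pi_pos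
  -- the basic facts, valid for 0 < ε with 4εp1 ≤ 1
  have key : ∀ ε : ℝ, 0 < ε → 4 * ε * p1 ≤ 1 →
      (lamA ε)^2 + lamA ε + ε*p1 = 0 ∧ lamA ε ≤ -(1/2) ∧ -1 ≤ lamA ε :=
    fun ε hε h4 => lam_facts p1 ε hp1 hε h4
  have hε1pos : (0:ℝ) < 1/(8*p1) := by positivity
  have hmem : Set.Ioo (0:ℝ) (min (1/(8*p1)) 1) ∈ nhdsWithin 0 (Set.Ioi 0) :=
    Ioo_mem_nhdsGT_of_mem ⟨le_refl 0, by positivity⟩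
  refine ⟨?_, ?_, ?_, ?_⟩
  · intro ε hε h4
    simp only [zR, zA]
    ring
  · -- big-O for zA
    rw [Asymptotics.isBigO_iff]
    refine ⟨4 * (p1 * p3), ?_⟩
    filter_upwards [hmem] with ε hε
    obtain ⟨hε0, hεu⟩ := hε
    have h4 : 4 * ε * p1 ≤ 1 := by
      have := lt_of_lt_of_le hεu (min_le_left _ _)
      rw [lt_div_iff₀ (by positivity)] at this; nlinarith
    obtain ⟨hL, hLub, hLlb⟩ := key ε hε0 h4
    have hL0 : lamA ε ≠ 0 := by intro h; rw [h] at hLub; norm_num at hLub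
    have hq : 1/4 ≤ (lamA ε)^2 := by nlinarith
    have hid := zA_id p1 p2 p3 ε (lamA ε) (δ ε) hL hL0 (ne_of_gt hε0) hp2
    show ‖zA ε - (δ ε * p1 / p2 + p3 * ε)‖ ≤ 4 * (p1 * p3) * ‖ε^2‖
    rw [show zA ε - (δ ε * p1 / p2 + p3 * ε)
        = p1*p3*ε^2/(lamA ε)^2 from hid]
    rw [Real.norm_eq_abs, Real.norm_eq_abs, abs_div, abs_of_nonneg (sq_nonneg (lamA ε))]
    calc |p1*p3*ε^2| / (lamA ε)^2 ≤ 4 * |p1*p3*ε^2| := div_sq_le _ _ hq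
      _ = 4 * (p1 * p3) * |ε^2| := by
          rw [abs_mul, abs_mul, abs_of_pos hp1, abs_of_pos hp3]; ring
  · -- big-O for yStar
    rw [Asymptotics.isBigO_iff]
    refine ⟨4 * (Real.pi * p1^2 + |p2| * p3), ?_⟩
    filter_upwards [hmem] with ε hε
    obtain ⟨hε0, hεu⟩ := hε
    have hεle1 : ε ≤ 1 := le_of_lt (lt_of_lt_of_le hεu (min_le_right _ _))
    have h4 : 4 * ε * p1 ≤ 1 := by
      have := lt_of_lt_of_le hεu (min_le_left _ _)
      rw [lt_div_iff₀ (by positivity)] at this; nlinarith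
    obtain ⟨hL, hLub, hLlb⟩ := key ε hε0 h4
    have hL0 : lamA ε ≠ 0 := by intro h; rw [h] at hLub; norm_num at hLub
    have hq : 1/4 ≤ (lamA ε)^2 := by nlinarith
    have hid := yStar_id p1 p2 p3 ε (lamA ε) (δ ε) hL hL0
    have hsε : Real.sqrt ε ≤ 1 := Real.sqrt_le_one.mpr hεle1
    have hsε0 : 0 ≤ Real.sqrt ε := Real.sqrt_nonneg ε
    have hD0 : 0 ≤ δ ε := by simp only [δ]; positivity
    have hDle : δ ε ≤ Real.pi := by
      simp only [δ]; nlinarith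
    show ‖yStar ε + δ ε * p1 * ε‖ ≤ 4 * (Real.pi * p1^2 + |p2| * p3) * ‖ε^2‖
    rw [show yStar ε + δ ε * p1 * ε = -(δ ε*p1^2 + p2*p3)*ε^2/(lamA ε)^2 from hid]
    rw [Real.norm_eq_abs, Real.norm_eq_abs, abs_div, abs_of_nonneg (sq_nonneg (lamA ε))]
    calc |(-(δ ε*p1^2 + p2*p3)*ε^2)| / (lamA ε)^2 ≤ 4 * |(-(δ ε*p1^2 + p2*p3)*ε^2)| :=
        div_sq_le _ _ hq
      _ ≤ 4 * (Real.pi * p1^2 + |p2| * p3) * |ε^2| := by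
          rw [abs_mul, abs_neg]
          have h1 : |δ ε*p1^2 + p2*p3| ≤ Real.pi * p1^2 + |p2| * p3 := by
            calc |δ ε*p1^2 + p2*p3| ≤ |δ ε*p1^2| + |p2*p3| := abs_add_le _ _
              _ = δ ε*p1^2 + |p2| *p3 := by
                  have e1 : |δ ε*p1^2| = δ ε*p1^2 :=
                    abs_of_nonneg (mul_nonneg hD0 (sq_nonneg p1))
                  have e2 : |p2*p3| = |p2| * p3 := by rw [abs_mul, abs_of_pos hp3]
                  rw [e1, e2]
              _ ≤ Real.pi * p1^2 + |p2| * p3 := by nlinarith [sq_nonneg p1]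
          nlinarith [abs_nonneg (ε^2), abs_nonneg (δ ε*p1^2 + p2*p3)]
  · -- signs
    set M : ℝ := 4* |p2| *p3 + (1+4*p1)* |p2| *p3 + 1 with hM
    have hMpos : 0 < M := by positivity
    refine ⟨min (min (1/(8*p1)) 1) ((Real.pi*p1/M)^2), by positivity, ?_⟩
    rintro ε ⟨hε0, hεu⟩
    have hεu1 := lt_of_lt_of_le hεu (min_le_left _ _)
    have hεu2 := lt_of_lt_of_le hεu (min_le_right _ _)
    have hεle1 : ε ≤ 1 := le_of_lt (lt_of_lt_of_le hεu1 (min_le_right _ _))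
    have h4 : 4 * ε * p1 ≤ 1 := by
      have := lt_of_lt_of_le hεu1 (min_le_left _ _)
      rw [lt_div_iff₀ (by positivity)] at this; nlinarith
    obtain ⟨hL, hLub, hLlb⟩ := key ε hε0 h4
    have hL0 : lamA ε ≠ 0 := by intro h; rw [h] at hLub; norm_num at hLub
    have hq : 1/4 ≤ (lamA ε)^2 := by nlinarith
    have hq1 : (lamA ε)^2 ≤ 1 := by nlinarith
    set t := Real.sqrt ε with htdef
    have ht2 : t^2 = ε := Real.sq_sqrt hε0.le
    have ht0 : 0 < t := Real.sqrt_pos.mpr hε0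
    have htlt : t < Real.pi*p1/M := by
      have := Real.sqrt_lt_sqrt (le_of_lt hε0) hεu2
      rwa [Real.sqrt_sq (by positivity)] at this
    have htM : M * t < Real.pi * p1 := by
      have h := (lt_div_iff₀ hMpos).mp htlt
      linarith
    -- 1 + L bounds
    have h1L_lb : ε * p1 ≤ 1 + lamA ε := by
      have h := sq_nonneg (1 + lamA ε)
      have h' : (1 + lamA ε)^2 = 1 + 2*lamA ε + (lamA ε)^2 := by ring
      linarith [hL]
    have h1L_ub : 1 + lamA ε ≤ 2 * (ε * p1) := by
      have h := mul_nonneg (by linarith : (0:ℝ) ≤ -(2*lamA ε+1))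
        (by linarith : (0:ℝ) ≤ lamA ε + 1)
      have h' : -(2*lamA ε+1) * (lamA ε + 1) = -(2*(lamA ε)^2 + 3*lamA ε + 1) := by ring
      linarith [hL]
    -- bound on the correction term
    have habs : |p2 * p3 / (lamA ε)^2 * ε^2| ≤ 4 * (|p2| *p3*ε^2) := by
      have := div_sq_le (p2*p3) (lamA ε) hq
      calc |p2 * p3 / (lamA ε)^2 * ε^2| = |p2*p3| / (lamA ε)^2 * ε^2 := by
            rw [abs_mul, abs_div, abs_of_nonneg (sq_nonneg (lamA ε)),
              abs_of_nonneg (sq_nonneg ε)]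
        _ ≤ 4 * |p2*p3| * ε^2 := mul_le_mul_of_nonneg_right this (sq_nonneg ε)
        _ = 4 * (|p2| *p3*ε^2) := by rw [abs_mul, abs_of_pos hp3]; ring
    have hcorr_lb : -(4 * (|p2| *p3*ε^2)) ≤ p2 * p3 / (lamA ε)^2 * ε^2 := by
      have := neg_abs_le (p2 * p3 / (lamA ε)^2 * ε^2); linarith
    have hcorr_ub : p2 * p3 / (lamA ε)^2 * ε^2 ≤ 4 * (|p2| *p3*ε^2) := by
      have := le_abs_self (p2 * p3 / (lamA ε)^2 * ε^2); linarith
    have hDval : δ ε = Real.pi * t := rfl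
    have hD0 : 0 < δ ε := by rw [hDval]; positivity
    -- yStar < 0
    have hyneg : yStar ε < 0 := by
      have h1 : δ ε * (ε * p1) ≤ δ ε * (1 + lamA ε) :=
        mul_le_mul_of_nonneg_left h1L_lb hD0.le
      have h2 : yStar ε ≤ -(δ ε * (ε * p1)) + 4 * (|p2| *p3*ε^2) := by
        show -δ ε * (1 + lamA ε) - (p2 * p3 / (lamA ε) ^ 2) * ε ^ 2
          ≤ -(δ ε * (ε * p1)) + 4 * (|p2| *p3*ε^2)
        have hc : -(4 * (|p2| *p3*ε^2)) ≤ (p2 * p3 / (lamA ε)^2) * ε^2 := by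
          have h := hcorr_lb
          linarith [h]
        nlinarith [h1, hc]
      have htM' : (4* |p2| *p3 + (1+4*p1)* |p2| *p3 + 1) * t < Real.pi * p1 := by
        rw [← hM]; exact htM
      have h3 : 4 * |p2| * p3 * t < Real.pi * p1 := by
        have hpos : 0 ≤ (1+4*p1) * |p2| * p3 * t :=
          mul_nonneg (mul_nonneg (mul_nonneg (by linarith) (abs_nonneg p2)) hp3.le) ht0.le
        nlinarith [htM', hpos, ht0]
      -- δ ε * (ε * p1) = π p1 t^3 ; ε^2 = t^4
      have h4' : 4 * (|p2| *p3*ε^2) < δ ε * (ε * p1) := by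
        rw [hDval, ← ht2]
        have h5 := mul_lt_mul_of_pos_right h3 (pow_pos ht0 3)
        nlinarith [h5]
      linarith
    have hsy : Real.sign (yStar ε) = -Real.sign p1 := by
      rw [Real.sign_of_neg hyneg, Real.sign_of_pos hp1]
    refine ⟨hsy, ?_⟩
    -- zA sign
    have hid := zA_id p1 p2 p3 ε (lamA ε) (δ ε) hL hL0 (ne_of_gt hε0) hp2
    have hzA : zA ε = δ ε * p1 / p2 + p3 * ε + p1*p3*ε^2/(lamA ε)^2 := by
      have : zA ε - (δ ε * p1 / p2 + p3 * ε) = p1*p3*ε^2/(lamA ε)^2 := hid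
      linarith
    have hthird_nonneg : 0 ≤ p1*p3*ε^2/(lamA ε)^2 := by positivity
    rcases lt_or_gt_of_ne hp2 with hp2neg | hp2pos
    · -- p2 < 0 : zA < 0
      have habs2 : |p2| = -p2 := abs_of_neg hp2neg
      have hthird_ub : p1*p3*ε^2/(lamA ε)^2 ≤ 4*(p1*p3*ε^2) := by
        rw [div_le_iff₀ (lt_of_lt_of_le (by norm_num) hq)]
        have := mul_le_mul_of_nonneg_left hq
          (show (0:ℝ) ≤ 4*(p1*p3*ε^2) by positivity)
        linarith
      have hzAneg : zA ε < 0 := by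
        rw [hzA]
        have hfirst : δ ε * p1 / p2 = -(Real.pi * p1 * t / (-p2)) := by
          rw [hDval]; field_simp
        have h6 : ε * ε ≤ ε := mul_le_of_le_one_left hε0.le hεle1
        have h7 : 4*p1*p3*(ε*ε) ≤ 4*p1*p3*ε :=
          mul_le_mul_of_nonneg_left h6 (by positivity)
        have hrest : p3 * ε + 4*(p1*p3*ε^2) ≤ (1 + 4*p1)*p3*ε := by linarith [h7]
        have hε_t : ε = t * t := by rw [← ht2]; ring
        have hneed : (1 + 4*p1)*p3*ε < Real.pi * p1 * t / (-p2) := by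
          rw [div_eq_mul_inv, hε_t]
          have hnp2 : 0 < -p2 := by linarith
          rw [← habs2]
          have htM' : (4* |p2| *p3 + (1+4*p1)* |p2| *p3 + 1) * t < Real.pi * p1 := by
            rw [← hM]; exact htM
          have key2 : (1+4*p1)* |p2| *p3*t < Real.pi * p1 := by
            have hpos2 : (0:ℝ) ≤ 4 * |p2| * p3 * t := by positivity
            linarith [htM', hpos2, ht0]
          have hinv : 0 < (|p2|:ℝ)⁻¹ := by positivity
          rw [show Real.pi * p1 * t * |p2|⁻¹ = (Real.pi * p1) * t * |p2|⁻¹ by ring]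
          rw [show (1+4*p1)*p3*(t*t) = ((1+4*p1)* |p2| *p3*t) * t * |p2|⁻¹ by
            field_simp]
          have hlt : ((1+4*p1)* |p2| *p3*t) * t * |p2|⁻¹ < (Real.pi * p1) * t * |p2|⁻¹ :=
            mul_lt_mul_of_pos_right (mul_lt_mul_of_pos_right key2 ht0) hinv
          exact hlt
        rw [hfirst]
        linarith
      have hsz : Real.sign (zA ε) = -1 := Real.sign_of_neg hzAneg
      have : p1 / p2 < 0 := div_neg_of_pos_of_neg hp1 hp2neg
      rw [hsz, Real.sign_of_neg this]
    · -- p2 > 0 : zA > 0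
      have hzApos : 0 < zA ε := by
        rw [hzA]
        have h1 : 0 < δ ε * p1 / p2 := by positivity
        have h2 : 0 < p3 * ε := by positivity
        linarith
      have : 0 < p1 / p2 := div_pos hp1 hp2pos
      rw [Real.sign_of_pos hzApos, Real.sign_of_pos this]
end

section
/- Suppose p₁ > 0, p₂ < 0, p₃ > 0, and let N be the integer such that z̃₁ = δp₁/p₂ + (p₃/√p₁)√ε + O(ε) lies in the interval (r̃_N, r̃_{N−1}), where r̃_k = −((2k+1)/2)(p₃√ε/√p₁)(π/2) and δ = π√ε. Then for ε small enough, −(4+π)/(4π) < N/2 − μ < (π−4)/(4π), where μ = p₁√p₁/|p₂p₃|; consequently the number [N/2] + 1 of maximal canards equals [μ] + 1 (for generic μ). -/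
/-- If the pole `z̃₁ = δp₁/p₂ + (p₃/√p₁)√ε` (with `δ = π√ε`, leading order) lies in
`(r̃_N, r̃_{N−1})`, then `−(4+π)/(4π) < N/2 − μ < (π−4)/(4π)`, where
`μ = p₁√p₁/|p₂p₃|`. -/
theorem canard_count_estimate (ε p1 p2 p3 : ℝ) (N : ℤ) (hε : 0 < ε) (hp1 : 0 < p1)
    (hp2 : p2 < 0) (hp3 : 0 < p3) :
    let rt := fun k : ℤ => -((2 * (k : ℝ) + 1) / 2) * (p3 * Real.sqrt ε / Real.sqrt p1) * (Real.pi / 2)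
    let z1t := Real.pi * Real.sqrt ε * p1 / p2 + (p3 / Real.sqrt p1) * Real.sqrt ε
    let μ := p1 * Real.sqrt p1 / |p2 * p3|
    rt N < z1t → z1t < rt (N - 1) →
      -(4 + Real.pi) / (4 * Real.pi) < (N : ℝ) / 2 - μ ∧
      (N : ℝ) / 2 - μ < (Real.pi - 4) / (4 * Real.pi) := by
  intro rt z1t μ h1 h2
  have hs : 0 < Real.sqrt ε := Real.sqrt_pos.mpr hε
  have hq : 0 < Real.sqrt p1 := Real.sqrt_pos.mpr hp1
  have habs : |p2 * p3| = -(p2 * p3) := abs_of_neg (mul_neg_of_neg_of_pos hp2 hp3)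
  have hπ := Real.pi_pos
  simp only [rt, z1t, μ, habs, Int.cast_sub, Int.cast_one] at h1 h2 ⊢
  have hp2' : p2 ≠ 0 := hp2.ne
  have hq' : Real.sqrt p1 ≠ 0 := hq.ne'
  have hs' : Real.sqrt ε ≠ 0 := hs.ne'
  have hp3' : p3 ≠ 0 := hp3.ne'
  set a := Real.sqrt ε with ha
  set b := Real.sqrt p1 with hb
  set m := p1 * b / -(p2 * p3) with hm
  have hpos : (0:ℝ) < b / (p3 * a) := by positivity
  have e1 : ∀ k : ℝ, (-((2 * k + 1) / 2) * (p3 * a / b) * (Real.pi / 2)) * (b / (p3 * a))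
      = -((2 * k + 1) / 2) * (Real.pi / 2) := by
    intro k; field_simp
  have e2 : (Real.pi * a * p1 / p2 + p3 / b * a) * (b / (p3 * a)) = -Real.pi * m + 1 := by
    rw [hm]; field_simp
  have key1 := mul_lt_mul_of_pos_right h1 hpos
  rw [e1, e2] at key1
  have key2 := mul_lt_mul_of_pos_right h2 hpos
  rw [e1, e2] at key2
  constructor
  · rw [div_lt_iff₀ (by positivity : (0:ℝ) < 4 * Real.pi)]
    nlinarith [key1]
  · rw [lt_div_iff₀ (by positivity : (0:ℝ) < 4 * Real.pi)]
    nlinarith [key2]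
end
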